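/- arXiv:1909.03145 — 2 statements merged into one kernel-verified Lean document; each statement's English description precedes it below -/
import Mathlib

section
/- Let A be a d×d real symmetric positive definite matrix with smallest eigenvalue μ > 0, largest eigenvalue L, and κ(A) = L/μ. For G = G_HB = [[0, I], [−A/μ, −2I]] take the splitting M = [[0, 0], [−A/μ, −2I]], N = [[0, I], [0, 0]]; for G = G_NAG = [[−I, I], [I − A/μ, −I]] take M = [[−I, 0], [I − A/μ, −I]], N = [[0, I], [0, 0]]. For step size α > 0 define the Gauss–Seidel iteration matrix E(α, G) = (I − αM)⁻¹(I + αN). If 0 < α ≤ 2/√(κ(A)), then the spectral radius satisfies ρ(E(α, G)) ≤ 1/√(1 + 2α); in particular, for α = 2/√(κ(A)) one has ρ(E(α, G)) ≤ 1/(1 + 1/√(κ(A))). -/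
open Matrix

/-- Spectral radius of a real square matrix: maximum modulus of its complex eigenvalues. -/
noncomputable def specRad {n : Type*} [Fintype n] [DecidableEq n] (M : Matrix n n ℝ) : ℝ :=
  sSup {r : ℝ | ∃ z ∈ spectrum ℂ (M.map Complex.ofReal), r = ‖z‖}

namespace StmtAux

lemma quad_abs {p q : ℝ} {z : ℂ} (hp : 0 < p) (hq : q^2 ≤ 4*p)
    (hz : (p:ℂ) * z^2 + (q:ℂ) * z + 1 = 0) : ‖z‖^2 = 1/p := by
  set t : ℝ := q/(2*p) with ht
  set s : ℝ := Real.sqrt (4*p - q^2) / (2*p) with hs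
  have h0 : (0:ℝ) ≤ 4*p - q^2 := by linarith
  have hs2 : s^2 = (4*p - q^2)/(4*p^2) := by
    rw [hs, div_pow, Real.sq_sqrt h0]; ring
  have hp' : (p:ℂ) ≠ 0 := by exact_mod_cast hp.ne'
  have hs2' : ((s:ℂ))^2 = ((4*p - q^2) : ℂ)/(4*(p:ℂ)^2) := by
    have := congrArg (Complex.ofReal) hs2
    push_cast at this
    convert this using 2
  have ht' : (t:ℂ) = (q:ℂ)/(2*p) := by rw [ht]; push_cast; ring
  have key : (z + t)^2 = -(s:ℂ)^2 := by
    rw [hs2', ht']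
    field_simp
    ring_nf
    ring_nf at hz
    linear_combination (16*(p:ℂ)) * hz
  have hfac : (z + t - s*Complex.I) * (z + t + s*Complex.I) = 0 := by
    have hI : (Complex.I)^2 = -1 := Complex.I_sq
    linear_combination key - (s:ℂ)^2 * hI
  have habs : t^2 + s^2 = 1/p := by
    rw [hs2, ht, div_pow]; field_simp; ring
  rcases mul_eq_zero.mp hfac with h | h
  · have hz' : z = -(t:ℂ) + s*Complex.I := by linear_combination h
    rw [hz', Complex.sq_norm]
    simp [Complex.normSq_apply]
    linear_combination habs
  · have hz' : z = -(t:ℂ) - s*Complex.I := by linear_combination h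
    rw [hz', Complex.sq_norm]
    simp [Complex.normSq_apply]
    linear_combination habs

lemma specRad_le {n : Type*} [Fintype n] [DecidableEq n] {M : Matrix n n ℝ} {r : ℝ} (hr : 0 ≤ r)
    (h : ∀ z ∈ spectrum ℂ (M.map Complex.ofReal), ‖z‖ ≤ r) : specRad M ≤ r := by
  apply Real.sSup_le _ hr
  rintro x ⟨z, hz, rfl⟩
  exact h z hz

lemma spec_to_eig {n : Type*} [Fintype n] [DecidableEq n] {B C : Matrix n n ℝ}
    (hB : IsUnit B.det) {z : ℂ} (hz : z ∈ spectrum ℂ ((B⁻¹ * C).map Complex.ofReal)) :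
    ∃ v : n → ℂ, v ≠ 0 ∧ (C.map Complex.ofReal).mulVec v = z • (B.map Complex.ofReal).mulVec v := by
  set E := B⁻¹ * C with hE
  have hmem := spectrum.mem_iff.mp hz
  rw [Matrix.isUnit_iff_isUnit_det] at hmem
  have hdet : ((z • (1:Matrix n n ℂ)) - E.map Complex.ofReal).det = 0 := by
    by_contra hne
    exact hmem (by
      convert isUnit_iff_ne_zero.mpr hne
      exacts [rfl, Algebra.algebraMap_eq_smul_one z])
  obtain ⟨v, hv, hveq⟩ := (Matrix.exists_mulVec_eq_zero_iff).mpr hdet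
  refine ⟨v, hv, ?_⟩
  have hEv : (E.map Complex.ofReal).mulVec v = z • v := by
    have := hveq
    rw [Matrix.sub_mulVec, Matrix.smul_mulVec, Matrix.one_mulVec, sub_eq_zero] at this
    exact this.symm
  have hBE : B * E = C := by
    rw [hE, ← Matrix.mul_assoc, Matrix.mul_nonsing_inv _ hB, Matrix.one_mul]
  have hmap : (B.map Complex.ofReal) * (E.map Complex.ofReal) = C.map Complex.ofReal := by
    have h := Matrix.map_mul (L := B) (M := E) (f := Complex.ofRealHom)
    rw [hBE] at h
    exact h.symm
  calc (C.map Complex.ofReal).mulVec v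
      = ((B.map Complex.ofReal) * (E.map Complex.ofReal)).mulVec v := by rw [hmap]
    _ = (B.map Complex.ofReal).mulVec ((E.map Complex.ofReal).mulVec v) := by
        rw [Matrix.mulVec_mulVec]
    _ = (B.map Complex.ofReal).mulVec (z • v) := by rw [hEv]
    _ = z • (B.map Complex.ofReal).mulVec v := by rw [Matrix.mulVec_smul]

lemma master {n : Type*} [Fintype n] [DecidableEq n] {B C : Matrix n n ℝ}
    (hdet : IsUnit B.det) {α p : ℝ} (hα0 : 0 < α) (hp : 1 + 2*α ≤ p)
    (hquad : ∀ (z : ℂ) (v : n → ℂ), v ≠ 0 →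
       (C.map Complex.ofReal).mulVec v = z • (B.map Complex.ofReal).mulVec v →
       ∃ q : ℝ, q^2 ≤ 4*p ∧ (p:ℂ)*z^2 + (q:ℂ)*z + 1 = 0) :
    specRad (B⁻¹ * C) ≤ 1 / Real.sqrt (1 + 2*α) := by
  have h12 : (0:ℝ) < 1 + 2*α := by linarith
  have hppos : (0:ℝ) < p := lt_of_lt_of_le h12 hp
  apply specRad_le (by positivity)
  intro z hz
  obtain ⟨v, hv, hveq⟩ := spec_to_eig hdet hz
  obtain ⟨q, hq, hzq⟩ := hquad z v hv hveq
  have habs : ‖z‖^2 = 1/p := quad_abs hppos hq hzq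
  have h1 : ‖z‖ = Real.sqrt (1/p) := by
    rw [← habs, Real.sqrt_sq (norm_nonneg z)]
  rw [h1, one_div, one_div, ← Real.sqrt_inv]
  apply Real.sqrt_le_sqrt
  rw [inv_le_inv₀ hppos h12] at *
  exact hp

lemma eig_real_mem {n : Type*} [Fintype n] [DecidableEq n]
    {A : Matrix n n ℝ} (hA : A.IsSymm) {x : n → ℂ} (hx : x ≠ 0) {c : ℂ}
    (h : (A.map Complex.ofReal).mulVec x = c • x) :
    ∃ r : ℝ, (r:ℂ) = c ∧ r ∈ spectrum ℝ A := by
  classical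
  have hne : ∃ i, x i ≠ 0 := by
    by_contra hcon
    push_neg at hcon
    exact hx (funext fun i => hcon i)
  have hSpos : 0 < ∑ i, Complex.normSq (x i) := by
    obtain ⟨i0, hi0⟩ := hne
    apply Finset.sum_pos' (fun i _ => Complex.normSq_nonneg _)
    exact ⟨i0, Finset.mem_univ _, Complex.normSq_pos.mpr hi0⟩
  have hmv : ∀ i, ∑ j, (A i j : ℂ) * x j = c * x i := by
    intro i
    have := congrFun h i
    simpa [Matrix.mulVec, dotProduct, Matrix.map_apply] using this
  set S : ℂ := ∑ i, (starRingEnd ℂ) (x i) * x i with hS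
  have hSr : S = ((∑ i, Complex.normSq (x i) : ℝ) : ℂ) := by
    push_cast
    apply Finset.sum_congr rfl
    intro i _
    rw [← Complex.mul_conj (x i), mul_comm]
  have hSne : S ≠ 0 := by
    rw [hSr]
    exact_mod_cast hSpos.ne'
  have hSstar : (starRingEnd ℂ) S = S := by
    rw [hS, map_sum]
    apply Finset.sum_congr rfl
    intro i _
    simp [mul_comm]
  have hTc : ∑ i, (starRingEnd ℂ) (x i) * (c * x i) = c * S := by
    rw [hS, Finset.mul_sum]
    apply Finset.sum_congr rfl
    intro i _
    ring
  have hTA : ∑ i, (starRingEnd ℂ) (x i) * (c * x i)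
      = ∑ i, ∑ j, (starRingEnd ℂ) (x i) * ((A i j : ℂ) * x j) := by
    apply Finset.sum_congr rfl
    intro i _
    rw [← hmv i, Finset.mul_sum]
  have hsym : (starRingEnd ℂ) (∑ i, ∑ j, (starRingEnd ℂ) (x i) * ((A i j : ℂ) * x j))
      = ∑ i, ∑ j, (starRingEnd ℂ) (x i) * ((A i j : ℂ) * x j) := by
    rw [map_sum]
    rw [Finset.sum_comm]
    apply Finset.sum_congr rfl
    intro i _
    rw [map_sum]
    apply Finset.sum_congr rfl
    intro j _
    simp only [_root_.map_mul, Complex.conj_conj, Complex.conj_ofReal]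
    rw [hA.apply i j]
    ring
  have hreal : (starRingEnd ℂ) c = c := by
    have h1 : (starRingEnd ℂ) (c * S) = c * S := by
      rw [← hTc, hTA]
      exact hsym
    rw [_root_.map_mul, hSstar] at h1
    exact mul_right_cancel₀ hSne h1
  obtain ⟨r, hr⟩ : ∃ r : ℝ, (r:ℂ) = c := ⟨c.re, Complex.conj_eq_iff_re.mp hreal⟩
  refine ⟨r, hr, ?_⟩
  have hre : A.mulVec (fun j => (x j).re) = r • (fun j => (x j).re) := by
    funext i
    have h1 := congrArg Complex.re (hmv i)
    rw [← hr] at h1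
    simpa [Matrix.mulVec, dotProduct, Complex.re_sum, Complex.re_ofReal_mul] using h1
  have him : A.mulVec (fun j => (x j).im) = r • (fun j => (x j).im) := by
    funext i
    have h1 := congrArg Complex.im (hmv i)
    rw [← hr] at h1
    simpa [Matrix.mulVec, dotProduct, Complex.im_sum, Complex.im_ofReal_mul] using h1
  have hvec : ∃ y : n → ℝ, y ≠ 0 ∧ A.mulVec y = r • y := by
    by_cases hu : (fun j => (x j).re) = 0
    · refine ⟨(fun j => (x j).im), ?_, him⟩
      intro hw
      obtain ⟨i0, hi0⟩ := hne
      apply hi0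
      have h1 : (x i0).re = 0 := congrFun hu i0
      have h2 : (x i0).im = 0 := congrFun hw i0
      exact Complex.ext h1 h2
    · exact ⟨_, hu, hre⟩
  obtain ⟨y, hy0, hy⟩ := hvec
  rw [spectrum.mem_iff]
  intro hunit
  rw [Matrix.isUnit_iff_isUnit_det, isUnit_iff_ne_zero] at hunit
  apply hunit
  rw [← Matrix.exists_mulVec_eq_zero_iff]
  refine ⟨y, hy0, ?_⟩
  rw [Matrix.sub_mulVec, hy, Algebra.algebraMap_eq_smul_one, Matrix.smul_mulVec,
    Matrix.one_mulVec, sub_self]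

lemma mapOne {n : Type*} [Fintype n] [DecidableEq n] :
    (1 : Matrix n n ℝ).map Complex.ofReal = 1 := by
  ext i j; by_cases h : i = j <;> simp [Matrix.one_apply, h]

lemma mapZero {n m : Type*} : (0 : Matrix n m ℝ).map Complex.ofReal = 0 := by
  ext i j; simp

lemma mapSmul {n m : Type*} (c : ℝ) (B : Matrix n m ℝ) :
    (c • B).map Complex.ofReal = (c:ℂ) • B.map Complex.ofReal := by
  ext i j; simp

lemma mapSub {n m : Type*} (B C : Matrix n m ℝ) :
    (B - C).map Complex.ofReal = B.map Complex.ofReal - C.map Complex.ofReal := by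
  ext i j; simp

section Blocks
variable {d : ℕ} {A : Matrix (Fin d) (Fin d) ℝ} {μ L α : ℝ}

lemma hquadHB (hA : A.IsSymm)
    (hbound : ∀ lam ∈ spectrum ℝ A, μ ≤ lam ∧ lam ≤ L) (hμpos : 0 < μ)
    (hα0 : 0 < α) (hκ4 : α^2 * (L/μ) ≤ 4) (hsle : Real.sqrt (1+2*α) ≤ 1 + α)
    (z : ℂ) (v : (Fin d ⊕ Fin d) → ℂ) (hv : v ≠ 0)
    (hveq : ((Matrix.fromBlocks 1 (α•1) 0 1 : Matrix (Fin d ⊕ Fin d) (Fin d ⊕ Fin d) ℝ).map Complex.ofReal).mulVec v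
      = z • ((Matrix.fromBlocks 1 0 ((α*μ⁻¹)•A) ((1+2*α)•1) : Matrix (Fin d ⊕ Fin d) (Fin d ⊕ Fin d) ℝ).map Complex.ofReal).mulVec v) :
    ∃ q : ℝ, q^2 ≤ 4*(1+2*α) ∧ ((1+2*α : ℝ):ℂ)*z^2 + (q:ℂ)*z + 1 = 0 := by
  classical
  set A' := A.map Complex.ofReal with hA'
  set x : Fin d → ℂ := fun i => v (Sum.inl i) with hxdef
  set y : Fin d → ℂ := fun i => v (Sum.inr i) with hydef
  have hvelim : v = Sum.elim x y := by funext i; cases i <;> rfl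
  rw [hvelim] at hveq
  simp only [Matrix.fromBlocks_map, mapOne, mapZero, mapSmul] at hveq
  push_cast at hveq
  rw [Matrix.fromBlocks_mulVec, Matrix.fromBlocks_mulVec] at hveq
  simp only [Matrix.one_mulVec, Matrix.zero_mulVec, Matrix.smul_mulVec,
    zero_add, add_zero] at hveq
  have h1 : ∀ i, x i + (α:ℂ) * y i = z * x i := by
    intro i
    have := congrFun hveq (Sum.inl i)
    simpa using this
  have h2 : ∀ i, y i = z * (((α:ℂ) * ((μ:ℂ))⁻¹) * (A'.mulVec x) i + ((1:ℂ)+2*α) * y i) := by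
    intro i
    have := congrFun hveq (Sum.inr i)
    simpa [mul_add] using this
  have hαC : (α:ℂ) ≠ 0 := by exact_mod_cast hα0.ne'
  have hμC : (μ:ℂ) ≠ 0 := by exact_mod_cast hμpos.ne'
  have hz0 : z ≠ 0 := by
    rintro rfl
    apply hv
    have hy0 : ∀ i, y i = 0 := by intro i; have := h2 i; simpa using this
    have hx0 : ∀ i, x i = 0 := by
      intro i
      have := h1 i
      rw [hy0 i] at this
      simpa using this
    rw [hvelim]
    funext i
    cases i with
    | inl i => exact hx0 i
    | inr i => exact hy0 i
  have hxne : x ≠ 0 := by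
    intro hx
    apply hv
    have hy0 : ∀ i, y i = 0 := by
      intro i
      have h := h1 i
      rw [show x i = 0 from congrFun hx i] at h
      simpa [hαC] using h
    rw [hvelim]
    funext i
    cases i with
    | inl i => exact congrFun hx i
    | inr i => exact hy0 i
  have key : ∀ i, (z * (α:ℂ)^2 * ((μ:ℂ))⁻¹) * (A'.mulVec x) i
      = ((z-1)*(1-z*((1:ℂ)+2*(α:ℂ)))) * x i := by
    intro i
    have e1 := h1 i
    have e2 := h2 i
    linear_combination (1-z*((1:ℂ)+2*(α:ℂ)))*e1 - (α:ℂ)*e2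
  set c : ℂ := ((z-1)*(1-z*((1:ℂ)+2*(α:ℂ)))) * (μ:ℂ) / (z*(α:ℂ)^2) with hc
  have hnz : (z * (α:ℂ)^2 * ((μ:ℂ))⁻¹) ≠ 0 :=
    mul_ne_zero (mul_ne_zero hz0 (pow_ne_zero _ hαC)) (inv_ne_zero hμC)
  have hAx : A'.mulVec x = c • x := by
    funext i
    apply mul_left_cancel₀ hnz
    rw [key i, hc]
    simp only [Pi.smul_apply, smul_eq_mul]
    field_simp
  obtain ⟨r, hrc, hrspec⟩ := eig_real_mem hA hxne hAx
  obtain ⟨hrμ, hrL⟩ := hbound r hrspec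
  have hscal : (r:ℂ) * (z*(α:ℂ)^2) = ((z-1)*(1-z*((1:ℂ)+2*(α:ℂ)))) * (μ:ℂ) := by
    rw [hc] at hrc
    field_simp at hrc
    linear_combination hrc
  refine ⟨α^2*(r/μ) - (2+2*α), ?_, ?_⟩
  · set a := r/μ with hadef
    have ha1 : 1 ≤ a := (one_le_div hμpos).mpr hrμ
    have haκ : a ≤ L/μ := by
      rw [hadef]
      exact div_le_div_of_nonneg_right hrL hμpos.le
    have hs := Real.sq_sqrt (show (0:ℝ) ≤ 1+2*α by linarith)
    set s := Real.sqrt (1+2*α) with hsdef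
    have hs0 : 0 ≤ s := Real.sqrt_nonneg _
    have hs1 : 1 ≤ s := by nlinarith [hs, hs0]
    have hαa4 : α^2 * a ≤ 4 := by
      have h' : α^2 * a ≤ α^2 * (L/μ) := by nlinarith [sq_nonneg α]
      linarith
    have hLb : -(2*s) ≤ α^2*a - (2+2*α) := by
      have h' : α^2 * 1 ≤ α^2*a := by nlinarith [sq_nonneg α]
      nlinarith [hs, hsle, hs0]
    have hUb : α^2*a - (2+2*α) ≤ 2*s := by nlinarith
    calc (α^2*a - (2+2*α))^2 ≤ (2*s)^2 := sq_le_sq' hLb hUb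
      _ = 4*(1+2*α) := by rw [mul_pow, hs]; ring
  · push_cast
    field_simp
    ring_nf
    ring_nf at hscal
    linear_combination hscal

lemma hquadNAG (hA : A.IsSymm)
    (hbound : ∀ lam ∈ spectrum ℝ A, μ ≤ lam ∧ lam ≤ L) (hμpos : 0 < μ)
    (hα0 : 0 < α) (hκ4 : α^2 * (L/μ) ≤ 4)
    (z : ℂ) (v : (Fin d ⊕ Fin d) → ℂ) (hv : v ≠ 0)
    (hveq : ((Matrix.fromBlocks 1 (α•1) 0 1 : Matrix (Fin d ⊕ Fin d) (Fin d ⊕ Fin d) ℝ).map Complex.ofReal).mulVec v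
      = z • ((Matrix.fromBlocks ((1+α)•1) 0 ((α*μ⁻¹)•A - α•1) ((1+α)•1) : Matrix (Fin d ⊕ Fin d) (Fin d ⊕ Fin d) ℝ).map Complex.ofReal).mulVec v) :
    ∃ q : ℝ, q^2 ≤ 4*((1+α)^2) ∧ (((1+α)^2 : ℝ):ℂ)*z^2 + (q:ℂ)*z + 1 = 0 := by
  classical
  set A' := A.map Complex.ofReal with hA'
  set x : Fin d → ℂ := fun i => v (Sum.inl i) with hxdef
  set y : Fin d → ℂ := fun i => v (Sum.inr i) with hydef
  have hvelim : v = Sum.elim x y := by funext i; cases i <;> rfl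
  rw [hvelim] at hveq
  simp only [Matrix.fromBlocks_map, mapOne, mapZero, mapSmul, mapSub] at hveq
  push_cast at hveq
  rw [Matrix.fromBlocks_mulVec, Matrix.fromBlocks_mulVec] at hveq
  simp only [Matrix.one_mulVec, Matrix.zero_mulVec, Matrix.smul_mulVec,
    Matrix.sub_mulVec, zero_add, add_zero] at hveq
  have h1 : ∀ i, x i + (α:ℂ) * y i = z * (((1:ℂ)+α) * x i) := by
    intro i
    have := congrFun hveq (Sum.inl i)
    simpa using this
  have h2 : ∀ i, y i = z * (((α:ℂ) * ((μ:ℂ))⁻¹) * (A'.mulVec x) i - (α:ℂ) * x i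
      + ((1:ℂ)+α) * y i) := by
    intro i
    have := congrFun hveq (Sum.inr i)
    simpa [mul_add, mul_sub] using this
  have hαC : (α:ℂ) ≠ 0 := by exact_mod_cast hα0.ne'
  have hμC : (μ:ℂ) ≠ 0 := by exact_mod_cast hμpos.ne'
  have hz0 : z ≠ 0 := by
    rintro rfl
    apply hv
    have hy0 : ∀ i, y i = 0 := by intro i; have := h2 i; simpa using this
    have hx0 : ∀ i, x i = 0 := by
      intro i
      have := h1 i
      rw [hy0 i] at this
      simpa using this
    rw [hvelim]
    funext i
    cases i with
    | inl i => exact hx0 i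
    | inr i => exact hy0 i
  have hxne : x ≠ 0 := by
    intro hx
    apply hv
    have hy0 : ∀ i, y i = 0 := by
      intro i
      have h := h1 i
      rw [show x i = 0 from congrFun hx i] at h
      simpa [hαC] using h
    rw [hvelim]
    funext i
    cases i with
    | inl i => exact congrFun hx i
    | inr i => exact hy0 i
  have key : ∀ i, (z * (α:ℂ)^2 * ((μ:ℂ))⁻¹) * (A'.mulVec x) i
      = (z*(α:ℂ)^2 - (z*((1:ℂ)+α)-1)^2) * x i := by
    intro i
    have e1 := h1 i
    have e2 := h2 i
    linear_combination (1-z*((1:ℂ)+(α:ℂ)))*e1 - (α:ℂ)*e2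
  set c : ℂ := (z*(α:ℂ)^2 - (z*((1:ℂ)+α)-1)^2) * (μ:ℂ) / (z*(α:ℂ)^2) with hc
  have hnz : (z * (α:ℂ)^2 * ((μ:ℂ))⁻¹) ≠ 0 :=
    mul_ne_zero (mul_ne_zero hz0 (pow_ne_zero _ hαC)) (inv_ne_zero hμC)
  have hAx : A'.mulVec x = c • x := by
    funext i
    apply mul_left_cancel₀ hnz
    rw [key i, hc]
    simp only [Pi.smul_apply, smul_eq_mul]
    field_simp
  obtain ⟨r, hrc, hrspec⟩ := eig_real_mem hA hxne hAx
  obtain ⟨hrμ, hrL⟩ := hbound r hrspec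
  have hscal : (r:ℂ) * (z*(α:ℂ)^2) = (z*(α:ℂ)^2 - (z*((1:ℂ)+α)-1)^2) * (μ:ℂ) := by
    rw [hc] at hrc
    field_simp at hrc
    linear_combination hrc
  refine ⟨α^2*(r/μ - 1) - 2*(1+α), ?_, ?_⟩
  · set a := r/μ with hadef
    have ha1 : 1 ≤ a := (one_le_div hμpos).mpr hrμ
    have haκ : a ≤ L/μ := by
      rw [hadef]
      exact div_le_div_of_nonneg_right hrL hμpos.le
    have hαa4 : α^2 * a ≤ 4 := by
      have h' : α^2 * a ≤ α^2 * (L/μ) := by nlinarith [sq_nonneg α]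
      linarith
    have hLb : -(2*(1+α)) ≤ α^2*(a - 1) - 2*(1+α) := by nlinarith [sq_nonneg α]
    have hUb : α^2*(a - 1) - 2*(1+α) ≤ 2*(1+α) := by nlinarith [sq_nonneg α]
    calc (α^2*(a-1) - 2*(1+α))^2 ≤ (2*(1+α))^2 := sq_le_sq' hLb hUb
      _ = 4*((1+α)^2) := by ring
  · push_cast
    field_simp
    ring_nf
    ring_nf at hscal
    linear_combination hscal
end Blocks

end StmtAux

open StmtAux in
theorem stmt1 {d : ℕ} (A : Matrix (Fin d) (Fin d) ℝ) (μ L α : ℝ)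
    (hA : A.IsSymm) (hApd : A.PosDef)
    (hμspec : μ ∈ spectrum ℝ A) (hLspec : L ∈ spectrum ℝ A)
    (hbound : ∀ lam ∈ spectrum ℝ A, μ ≤ lam ∧ lam ≤ L)
    (hμpos : 0 < μ)
    (MHB NHB MNAG NNAG : Matrix (Fin d ⊕ Fin d) (Fin d ⊕ Fin d) ℝ)
    (hMHB : MHB = Matrix.fromBlocks 0 0 (-(μ⁻¹ • A)) (-2))
    (hNHB : NHB = Matrix.fromBlocks 0 1 0 0)
    (hMNAG : MNAG = Matrix.fromBlocks (-1) 0 (1 - μ⁻¹ • A) (-1))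
    (hNNAG : NNAG = Matrix.fromBlocks 0 1 0 0)
    (hα0 : 0 < α) (hα2 : α ≤ 2 / Real.sqrt (L / μ)) :
    specRad ((1 - α • MHB)⁻¹ * (1 + α • NHB)) ≤ 1 / Real.sqrt (1 + 2 * α) ∧
    specRad ((1 - α • MNAG)⁻¹ * (1 + α • NNAG)) ≤ 1 / Real.sqrt (1 + 2 * α) ∧
    (α = 2 / Real.sqrt (L / μ) →
      specRad ((1 - α • MHB)⁻¹ * (1 + α • NHB)) ≤ 1 / (1 + 1 / Real.sqrt (L / μ)) ∧
      specRad ((1 - α • MNAG)⁻¹ * (1 + α • NNAG)) ≤ 1 / (1 + 1 / Real.sqrt (L / μ))) := by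
  have hμL : μ ≤ L := (hbound μ hμspec).2
  have hκ1 : (1:ℝ) ≤ L/μ := (one_le_div hμpos).mpr hμL
  have hκpos : (0:ℝ) < L/μ := lt_of_lt_of_le one_pos hκ1
  have ht1 : (1:ℝ) ≤ Real.sqrt (L/μ) := by
    rw [show (1:ℝ) = Real.sqrt 1 from (Real.sqrt_one).symm]
    exact Real.sqrt_le_sqrt hκ1
  have ht0 : (0:ℝ) < Real.sqrt (L/μ) := lt_of_lt_of_le one_pos ht1
  have hκ4 : α^2 * (L/μ) ≤ 4 := by
    have h1 : α^2 ≤ (2 / Real.sqrt (L/μ))^2 := by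
      apply pow_le_pow_left₀ hα0.le hα2
    rw [div_pow, Real.sq_sqrt hκpos.le] at h1
    have h2 : α^2 * (L/μ) ≤ ((2:ℝ)^2 / (L/μ)) * (L/μ) := by nlinarith
    rw [div_mul_cancel₀] at h2
    · linarith
    · exact hκpos.ne'
  have hsle : Real.sqrt (1+2*α) ≤ 1 + α := by
    rw [show (1:ℝ)+α = Real.sqrt ((1+α)^2) from (Real.sqrt_sq (by linarith)).symm]
    apply Real.sqrt_le_sqrt
    nlinarith [sq_nonneg α]
  -- block forms
  have hBHB : (1 : Matrix (Fin d ⊕ Fin d) (Fin d ⊕ Fin d) ℝ) - α • MHB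
      = Matrix.fromBlocks 1 0 ((α*μ⁻¹)•A) ((1+2*α)•1) := by
    rw [hMHB]
    have h2 : (2 : Matrix (Fin d) (Fin d) ℝ) = 1 + 1 := (one_add_one_eq_two).symm
    ext (i|i) (j|j) <;>
      simp only [Matrix.sub_apply, Matrix.smul_apply, Matrix.fromBlocks_apply₁₁,
        Matrix.fromBlocks_apply₁₂, Matrix.fromBlocks_apply₂₁, Matrix.fromBlocks_apply₂₂,
        Matrix.one_apply, Matrix.neg_apply, Matrix.zero_apply, h2, Matrix.add_apply,
        smul_eq_mul, Sum.inl.injEq, Sum.inr.injEq, reduceCtorEq] <;>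
      split_ifs <;> first | cases ‹False› | ring
  have hBNAG : (1 : Matrix (Fin d ⊕ Fin d) (Fin d ⊕ Fin d) ℝ) - α • MNAG
      = Matrix.fromBlocks ((1+α)•1) 0 ((α*μ⁻¹)•A - α•1) ((1+α)•1) := by
    rw [hMNAG]
    ext (i|i) (j|j) <;>
      simp only [Matrix.sub_apply, Matrix.smul_apply, Matrix.fromBlocks_apply₁₁,
        Matrix.fromBlocks_apply₁₂, Matrix.fromBlocks_apply₂₁, Matrix.fromBlocks_apply₂₂,
        Matrix.one_apply, Matrix.neg_apply, Matrix.zero_apply, Matrix.add_apply,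
        smul_eq_mul, Sum.inl.injEq, Sum.inr.injEq, reduceCtorEq] <;>
      split_ifs <;> first | cases ‹False› | ring
  have hCeq : ∀ N : Matrix (Fin d ⊕ Fin d) (Fin d ⊕ Fin d) ℝ,
      N = Matrix.fromBlocks 0 1 0 0 →
      (1 : Matrix (Fin d ⊕ Fin d) (Fin d ⊕ Fin d) ℝ) + α • N
        = Matrix.fromBlocks 1 (α•1) 0 1 := by
    intro N hN
    rw [hN]
    ext (i|i) (j|j) <;>
      simp only [Matrix.sub_apply, Matrix.smul_apply, Matrix.fromBlocks_apply₁₁,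
        Matrix.fromBlocks_apply₁₂, Matrix.fromBlocks_apply₂₁, Matrix.fromBlocks_apply₂₂,
        Matrix.one_apply, Matrix.neg_apply, Matrix.zero_apply, Matrix.add_apply,
        smul_eq_mul, Sum.inl.injEq, Sum.inr.injEq, reduceCtorEq] <;>
      split_ifs <;> first | cases ‹False› | ring
  have hdetHB : IsUnit (Matrix.fromBlocks 1 0 ((α*μ⁻¹)•A) ((1+2*α)•1)
      : Matrix (Fin d ⊕ Fin d) (Fin d ⊕ Fin d) ℝ).det := by
    rw [Matrix.det_fromBlocks_zero₁₂, Matrix.det_one, Matrix.det_smul, Matrix.det_one]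
    apply isUnit_iff_ne_zero.mpr
    positivity
  have hdetNAG : IsUnit (Matrix.fromBlocks ((1+α)•1) 0 ((α*μ⁻¹)•A - α•1) ((1+α)•1)
      : Matrix (Fin d ⊕ Fin d) (Fin d ⊕ Fin d) ℝ).det := by
    rw [Matrix.det_fromBlocks_zero₁₂]
    simp only [Matrix.det_smul, Matrix.det_one]
    apply isUnit_iff_ne_zero.mpr
    positivity
  have hHB : specRad ((1 - α • MHB)⁻¹ * (1 + α • NHB)) ≤ 1 / Real.sqrt (1 + 2 * α) := by
    rw [hBHB, hCeq NHB hNHB]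
    exact master hdetHB hα0 (le_refl _)
      (fun z v hv hveq => hquadHB hA hbound hμpos hα0 hκ4 hsle z v hv hveq)
  have hNAG : specRad ((1 - α • MNAG)⁻¹ * (1 + α • NNAG)) ≤ 1 / Real.sqrt (1 + 2 * α) := by
    rw [hBNAG, hCeq NNAG hNNAG]
    exact master hdetNAG hα0 (by nlinarith [sq_nonneg α])
      (fun z v hv hveq => hquadNAG hA hbound hμpos hα0 hκ4 z v hv hveq)
  refine ⟨hHB, hNAG, ?_⟩
  intro hαeq
  have hbnd : 1 / Real.sqrt (1 + 2 * α) ≤ 1 / (1 + 1 / Real.sqrt (L / μ)) := by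
    set t := Real.sqrt (L/μ) with htdef
    have htpos : 0 < 1 + 1/t := by positivity
    apply one_div_le_one_div_of_le htpos
    rw [show (1:ℝ) + 1/t = Real.sqrt ((1 + 1/t)^2) from (Real.sqrt_sq htpos.le).symm]
    apply Real.sqrt_le_sqrt
    rw [hαeq]
    have ht2 : t^2 = L/μ := Real.sq_sqrt hκpos.le
    have h1t : 1/t ≤ 1 := by
      rw [div_le_one ht0]
      exact ht1
    have hexp : (1 + 1/t)^2 = 1 + 2*(1/t) + (1/t)^2 := by ring
    rw [hexp]
    have h0t : (0:ℝ) ≤ 1/t := by positivity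
    have h2 : (1/t)^2 ≤ 1/t := by
      rw [pow_two]
      calc (1/t)*(1/t) ≤ (1/t)*1 := mul_le_mul_of_nonneg_left h1t h0t
        _ = 1/t := mul_one _
    have : 2/t = 2*(1/t) := by ring
    rw [this]
    nlinarith
  exact ⟨le_trans hHB hbnd, le_trans hNAG hbnd⟩
end

section
/- Let V be a real Hilbert space, 0 ≤ μ ≤ L, let f ∈ S^{1,1}_{μ,L}, let g : V → ℝ be convex, and set F = f + g. Fix λ > 0 and x ∈ V, and suppose G ∈ V satisfies the subgradient inclusion G − ∇f(x) ∈ ∂g(x − λG), i.e. g(z) ≥ g(x − λG) + ⟨G − ∇f(x), z − (x − λG)⟩ for all z ∈ V. Then for every y ∈ V: F(y) ≥ F(x − λG) + ⟨G, y − x⟩ + (μ/2)‖y − x‖² + (λ/2)(2 − λL)‖G‖². -/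
open RealInnerProductSpace

-- descent lemma
lemma descent_lemma {V : Type*} [NormedAddCommGroup V] [InnerProductSpace ℝ V] [CompleteSpace V]
    (L : ℝ) (hL : 0 ≤ L) (f : V → ℝ) (f' : V → V)
    (hdiff : ∀ z, HasGradientAt f (f' z) z)
    (hlip : ∀ z w : V, ‖f' z - f' w‖ ≤ L * ‖z - w‖)
    (x d : V) : f (x + d) ≤ f x + ⟪f' x, d⟫ + L / 2 * ‖d‖ ^ 2 := by
  set φ : ℝ → ℝ := fun t => f x + t * ⟪f' x, d⟫ + L / 2 * t ^ 2 * ‖d‖ ^ 2 - f (x + t • d)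
  have hderiv : ∀ t : ℝ, HasDerivAt φ
      (⟪f' x, d⟫ + L * t * ‖d‖ ^ 2 - ⟪f' (x + t • d), d⟫) t := by
    intro t
    have hline : HasDerivAt (fun t : ℝ => x + t • d) d t := by
      simpa using ((hasDerivAt_id t).smul_const d).const_add x
    have hf : HasDerivAt (fun t : ℝ => f (x + t • d)) ⟪f' (x + t • d), d⟫ t := by
      have := (hdiff (x + t • d)).hasFDerivAt.comp_hasDerivAt t hline
      simp at this
      exact this
    have h1 : HasDerivAt (fun t : ℝ => f x + t * ⟪f' x, d⟫ + L / 2 * t ^ 2 * ‖d‖ ^ 2)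
        (⟪f' x, d⟫ + L * t * ‖d‖ ^ 2) t := by
      have : HasDerivAt (fun t : ℝ => f x + t * ⟪f' x, d⟫ + L / 2 * t ^ 2 * ‖d‖ ^ 2)
          (0 + (1 * ⟪f' x, d⟫) + (L / 2 * (2 * t ^ 1) * ‖d‖ ^ 2)) t := by
        exact (((hasDerivAt_const t (f x)).add
          ((hasDerivAt_id t).mul_const _)).add
          (((hasDerivAt_pow 2 t).const_mul (L / 2)).mul_const (‖d‖ ^ 2)))
      convert this using 1; ring
    exact h1.sub hf
  have hmono : MonotoneOn φ (Set.Icc (0:ℝ) 1) := by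
    apply monotoneOn_of_deriv_nonneg (convex_Icc 0 1)
    · exact fun t _ => ((hderiv t).differentiableAt).continuousAt.continuousWithinAt
    · exact fun t _ => ((hderiv t).differentiableAt).differentiableWithinAt
    · intro t ht
      rw [interior_Icc] at ht
      rw [(hderiv t).deriv]
      have h1 : ⟪f' (x + t • d), d⟫ - ⟪f' x, d⟫ = ⟪f' (x + t • d) - f' x, d⟫ := by
        rw [inner_sub_left]
      have h2 : ⟪f' (x + t • d) - f' x, d⟫ ≤ ‖f' (x + t • d) - f' x‖ * ‖d‖ :=
        real_inner_le_norm _ _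
      have h3 : ‖f' (x + t • d) - f' x‖ ≤ L * (t * ‖d‖) := by
        have := hlip (x + t • d) x
        simpa [norm_smul, abs_of_nonneg ht.1.le] using this
      have h4 : ‖f' (x + t • d) - f' x‖ * ‖d‖ ≤ L * (t * ‖d‖) * ‖d‖ :=
        mul_le_mul_of_nonneg_right h3 (norm_nonneg d)
      nlinarith [norm_nonneg d]
  have h01 := hmono (Set.mem_Icc.2 ⟨le_refl 0, zero_le_one⟩)
      (Set.mem_Icc.2 ⟨zero_le_one, le_refl 1⟩) zero_le_one
  simp only [φ, zero_smul, add_zero, one_smul, zero_mul, one_mul, one_pow] at h01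
  nlinarith [h01]

theorem stmt12 {V : Type*} [NormedAddCommGroup V] [InnerProductSpace ℝ V] [CompleteSpace V]
    (μ L : ℝ) (hμ : 0 ≤ μ) (hμL : μ ≤ L) (f : V → ℝ) (f' : V → V)
    (hdiff : ∀ z, HasGradientAt f (f' z) z)
    (hconv : ∀ z w : V, f z - f w - ⟪f' w, z - w⟫ ≥ μ / 2 * ‖z - w‖ ^ 2)
    (hlip : ∀ z w : V, ‖f' z - f' w‖ ≤ L * ‖z - w‖)
    (g : V → ℝ) (hg : ConvexOn ℝ Set.univ g)
    (lam : ℝ) (hlam : 0 < lam) (x G : V)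
    (hsub : ∀ z : V, g z ≥ g (x - lam • G) + ⟪G - f' x, z - (x - lam • G)⟫) :
    ∀ y : V,
      f y + g y ≥ (f (x - lam • G) + g (x - lam • G)) + ⟪G, y - x⟫ +
        μ / 2 * ‖y - x‖ ^ 2 + lam / 2 * (2 - lam * L) * ‖G‖ ^ 2 := by
  intro y
  have hL : 0 ≤ L := le_trans hμ hμL
  have hdesc := descent_lemma L hL f f' hdiff hlip x (-(lam • G))
  have hxp : x + -(lam • G) = x - lam • G := by abel
  rw [hxp] at hdesc
  have hA := hconv y x
  have hB := hsub y
  have e1 : ⟪f' x, -(lam • G)⟫ = -(lam * ⟪f' x, G⟫) := by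
    rw [inner_neg_right, real_inner_smul_right]
  have e2 : ‖-(lam • G)‖ ^ 2 = lam ^ 2 * ‖G‖ ^ 2 := by
    rw [norm_neg, norm_smul]
    simp [abs_of_pos hlam, mul_pow]
  have e3 : ⟪G - f' x, y - (x - lam • G)⟫ =
      ⟪G, y - x⟫ - ⟪f' x, y - x⟫ + lam * ‖G‖ ^ 2 - lam * ⟪f' x, G⟫ := by
    have : y - (x - lam • G) = (y - x) + lam • G := by abel
    rw [this, inner_sub_left, inner_add_right, inner_add_right,
      real_inner_smul_right, real_inner_smul_right,
      real_inner_self_eq_norm_sq]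
    ring
  rw [e1, e2] at hdesc
  rw [e3] at hB
  nlinarith [hA, hB, hdesc]
end
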